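/- Fix an integer $N \geq 2$ and $\theta \in (0, \pi/N)$. Let $g(t,\alpha) = \sum_{j=1}^{N} \frac{\sin(\frac{2\pi j}{N} + \theta)}{(1 - t\cos(\frac{2\pi j}{N} + \theta))^{\alpha}}$ for $t \in (0,1)$, $\alpha > 0$. Then for every fixed $\alpha > 0$ there exists $\delta_\alpha > 0$ such that $g(t,\alpha) > 0$ for all $t \in (0,\delta_\alpha]$. -/

import Mathlib

open Real Finset

private lemma hasDerivAt_oneSub (c β t : ℝ) (h : 0 < 1 - t * c) :
    HasDerivAt (fun s : ℝ => (1 - s * c) ^ (-β)) (β * c * (1 - t * c) ^ (-(β+1))) t := by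
  have h1 : HasDerivAt (fun s : ℝ => 1 - s * c) (-c) t := by
    simpa using ((hasDerivAt_id t).mul_const c).const_sub 1
  have h2 := (Real.hasDerivAt_rpow_const (x := 1 - t*c) (p := -β) (Or.inl h.ne')).comp t h1
  refine h2.congr_deriv ?_
  rw [show -(β+1) = -β - 1 by ring]
  ring


private lemma pos_oneSub {c t b : ℝ} (hc : |c| ≤ 1) (ht : t ∈ Set.Icc (0:ℝ) b) (hb : b ≤ 1/2) :
    (1:ℝ)/2 ≤ 1 - t * c := by
  have h1 : t * c ≤ |t * c| := le_abs_self _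
  have h2 : |t * c| ≤ t := by
    rw [abs_mul, abs_of_nonneg ht.1]
    calc t * |c| ≤ t * 1 := by nlinarith [ht.1]
    _ = t := mul_one t
  nlinarith [ht.2]


private lemma iter_deriv (α c b : ℝ) (hc : |c| ≤ 1) (hb0 : 0 < b) (hb : b ≤ 1/2) (m : ℕ) :
    ∀ t ∈ Set.Icc (0:ℝ) b,
      iteratedDerivWithin m (fun s => (1 - s*c) ^ (-α)) (Set.Icc 0 b) t
        = (∏ i ∈ Finset.range m, (α+i)) * c^m * (1 - t*c) ^ (-(α+m)) := by
  induction m with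
  | zero => intro t ht; simp
  | succ m ih =>
    intro t ht
    have hu : UniqueDiffOn ℝ (Set.Icc (0:ℝ) b) := uniqueDiffOn_Icc hb0
    rw [iteratedDerivWithin_succ, derivWithin_congr ih (ih t ht)]
    have hpos : 0 < 1 - t*c := lt_of_lt_of_le (by norm_num) (pos_oneSub hc ht hb)
    have hd : HasDerivAt (fun s => (∏ i ∈ Finset.range m, (α+i)) * c^m * (1 - s*c) ^ (-(α+↑m)))
        ((∏ i ∈ Finset.range m, (α+i)) * c^m * ((α+m) * c * (1 - t*c) ^ (-(α+↑m+1)))) t :=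
      (hasDerivAt_oneSub c (α+m) t hpos).const_mul _
    rw [hd.hasDerivWithinAt.derivWithin (hu t ht)]
    rw [Finset.prod_range_succ, show -(α+↑(m+1)) = -(α+↑m+1) by push_cast; ring]
    ring


private lemma taylor_bound (α : ℝ) (hα : 0 < α) (N : ℕ) (hN : 1 ≤ N) (c : ℝ) (hc : |c| ≤ 1)
    (t : ℝ) (ht0 : 0 < t) (ht : t ≤ 1/2) :
    |(1 - t*c) ^ (-α) - ∑ k ∈ Finset.range N,
        (∏ i ∈ Finset.range k, (α+i)) / k.factorial * c^k * t^k|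
      ≤ (∏ i ∈ Finset.range N, (α+i)) * 2 ^ (α + N) / N.factorial * t^N := by
  obtain ⟨n, rfl⟩ : ∃ n, N = n + 1 := ⟨N - 1, (Nat.succ_pred_eq_of_pos hN).symm⟩
  set f : ℝ → ℝ := fun s => (1 - s*c) ^ (-α) with hf_def
  have hu : UniqueDiffOn ℝ (Set.Icc (0:ℝ) t) := uniqueDiffOn_Icc ht0
  have hposIcc : ∀ s ∈ Set.Icc (0:ℝ) t, 0 < 1 - s * c := fun s hs =>
    lt_of_lt_of_le (by norm_num) (pos_oneSub hc hs ht)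
  have hcd : ContDiffOn ℝ n f (Set.Icc 0 t) := by
    intro s hs
    have h1 : ContDiffAt ℝ n (fun x : ℝ => x ^ (-α)) (1 - s*c) :=
      Real.contDiffAt_rpow_const_of_ne (hposIcc s hs).ne'
    exact (h1.comp s (f := fun x : ℝ => 1 - x*c) (by fun_prop)).contDiffWithinAt
  have hdiff : DifferentiableOn ℝ (iteratedDerivWithin n f (Set.Icc 0 t)) (Set.Ioo 0 t) := by
    have : DifferentiableOn ℝ
        (fun s => (∏ i ∈ Finset.range n, (α+i)) * c^n * (1 - s*c) ^ (-(α+n))) (Set.Ioo 0 t) := by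
      intro s hs
      exact (((hasDerivAt_oneSub c (α+n) s
        (hposIcc s (Set.Ioo_subset_Icc_self hs))).const_mul _).differentiableAt).differentiableWithinAt
    exact this.congr fun s hs =>
      iter_deriv α c t hc ht0 ht n s (Set.Ioo_subset_Icc_self hs)
  have huIcc : Set.uIcc 0 t = Set.Icc 0 t := Set.uIcc_of_le ht0.le
  have huIoo : Set.uIoo 0 t = Set.Ioo 0 t := Set.uIoo_of_le ht0.le
  obtain ⟨x', hx', hrem⟩ := taylor_mean_remainder_lagrange (n := n) ht0.ne
    (by rw [huIcc]; exact hcd) (by rw [huIcc, huIoo]; exact hdiff)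
  rw [huIcc] at hrem
  rw [huIoo] at hx'
  have htay : taylorWithinEval f n (Set.Icc 0 t) 0 t
      = ∑ k ∈ Finset.range (n+1), (∏ i ∈ Finset.range k, (α+i)) / k.factorial * c^k * t^k := by
    rw [taylor_within_apply]
    refine Finset.sum_congr rfl fun k _ => ?_
    rw [iter_deriv α c t hc ht0 ht k 0 (Set.left_mem_Icc.2 ht0.le)]
    simp only [zero_mul, sub_zero, mul_zero]
    rw [Real.one_rpow]
    simp [smul_eq_mul]
    ring
  rw [htay] at hrem
  rw [hrem]
  rw [iter_deriv α c t hc ht0 ht (n+1) x' (Set.Ioo_subset_Icc_self hx')]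
  have h2b : (1 - x'*c) ^ (-(α+((n:ℝ)+1))) ≤ 2 ^ (α+((n:ℝ)+1)) := by
    have h1 : (1:ℝ)/2 ≤ 1 - x'*c := pos_oneSub hc (Set.Ioo_subset_Icc_self hx') ht
    have h2 := Real.rpow_le_rpow_of_nonpos (by norm_num : (0:ℝ) < 1/2) h1
      (neg_nonpos.mpr (by positivity) : -(α+((n:ℝ)+1)) ≤ 0)
    have h3 : ((1:ℝ)/2) ^ (-(α+((n:ℝ)+1))) = 2 ^ (α+((n:ℝ)+1)) := by
      rw [one_div, Real.inv_rpow (by norm_num), Real.rpow_neg (by norm_num), inv_inv]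
    rw [h3] at h2
    exact h2
  set p : ℝ := ∏ i ∈ Finset.range (n+1), (α+i) with hp_def
  have hp : 0 < p := Finset.prod_pos fun i _ => by positivity
  have hR : 0 < (1 - x'*c) ^ (-(α+((n:ℝ)+1))) :=
    Real.rpow_pos_of_pos (hposIcc x' (Set.Ioo_subset_Icc_self hx')) _
  have hcast : -(α + ((n:ℕ)+1 : ℕ) : ℝ) = -(α+((n:ℝ)+1)) := by push_cast; ring
  rw [hcast]
  have habs : |p * c^(n+1) * (1-x'*c)^(-(α+((n:ℝ)+1))) * (t-0)^(n+1) / ((n+1).factorial : ℝ)|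
      = p * |c|^(n+1) * (1-x'*c)^(-(α+((n:ℝ)+1))) * t^(n+1) / ((n+1).factorial : ℝ) := by
    rw [abs_div, abs_mul, abs_mul, abs_mul, abs_pow, abs_pow, abs_of_pos hp, abs_of_pos hR, sub_zero,
      abs_of_pos ht0, Nat.abs_cast]
  rw [habs]
  have hfinal : p * |c|^(n+1) * (1-x'*c)^(-(α+((n:ℝ)+1))) * t^(n+1) / ((n+1).factorial : ℝ)
      ≤ p * 1 * (2 ^ (α+((n:ℝ)+1))) * t^(n+1) / ((n+1).factorial : ℝ) := by
    gcongr
    exact pow_le_one₀ (abs_nonneg c) hc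
  refine hfinal.trans (le_of_eq ?_)
  rw [mul_one]
  have : (α + ((n:ℕ)+1 : ℕ) : ℝ) = α+((n:ℝ)+1) := by push_cast; ring
  rw [this]
  ring


private lemma sum_exp_aux (N : ℕ) (hN : 0 < N) (θ : ℝ) (n : ℤ) :
    ∑ j ∈ Finset.Icc 1 N, Complex.exp ((n:ℂ) * ((2*π*(j:ℝ)/N + θ : ℝ):ℂ) * Complex.I)
      = if (N:ℤ) ∣ n then (N:ℂ) * Complex.exp ((n:ℂ) * (θ:ℂ) * Complex.I) else 0 := by
  have hNC : ((N:ℂ)) ≠ 0 := Nat.cast_ne_zero.mpr hN.ne'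
  set z : ℂ := Complex.exp (2*(π:ℂ)*(n:ℂ)/(N:ℂ) * Complex.I) with hz
  have hterm : ∀ j ∈ Finset.Icc 1 N,
      Complex.exp ((n:ℂ) * ((2*π*(j:ℝ)/N + θ : ℝ):ℂ) * Complex.I)
        = Complex.exp ((n:ℂ) * (θ:ℂ) * Complex.I) * z ^ j := by
    intro j _
    rw [hz, ← Complex.exp_nat_mul, ← Complex.exp_add]
    congr 1
    push_cast
    field_simp
    ring
  rw [Finset.sum_congr rfl hterm, ← Finset.mul_sum]
  have hsum : ∑ j ∈ Finset.Icc 1 N, z ^ j = if (N:ℤ) ∣ n then (N:ℂ) else 0 := by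
    by_cases hdvd : (N:ℤ) ∣ n
    · obtain ⟨m, hm⟩ := hdvd
      have hz1 : z = 1 := by
        rw [hz, show 2*(π:ℂ)*(n:ℂ)/(N:ℂ) * Complex.I = (m:ℂ) * (2*(π:ℂ)*Complex.I) by
          rw [show ((n:ℂ)) = (N:ℂ) * (m:ℂ) by exact_mod_cast congrArg (Int.cast : ℤ → ℂ) hm]
          field_simp]
        exact_mod_cast Complex.exp_int_mul_two_pi_mul_I m
      have hd : (N:ℤ) ∣ n := ⟨m, hm⟩
      simp [hz1, hd]
    · have hz1 : z ≠ 1 := by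
        intro h
        rw [hz, Complex.exp_eq_one_iff] at h
        obtain ⟨m, hm⟩ := h
        apply hdvd
        refine ⟨m, ?_⟩
        have h2pi : (2*(π:ℂ)*Complex.I) ≠ 0 :=
          mul_ne_zero (mul_ne_zero two_ne_zero (Complex.ofReal_ne_zero.mpr Real.pi_ne_zero))
            Complex.I_ne_zero
        have key : (n:ℂ) * (2*(π:ℂ)*Complex.I) = ((N:ℂ)*(m:ℂ)) * (2*(π:ℂ)*Complex.I) := by
          calc (n:ℂ) * (2*(π:ℂ)*Complex.I) = (N:ℂ) * (2*(π:ℂ)*(n:ℂ)/(N:ℂ) * Complex.I) := by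
                field_simp
          _ = (N:ℂ) * ((m:ℂ) * (2*(π:ℂ)*Complex.I)) := by rw [hm]
          _ = ((N:ℂ)*(m:ℂ)) * (2*(π:ℂ)*Complex.I) := by ring
        have : (n:ℂ) = (N:ℂ) * (m:ℂ) := mul_right_cancel₀ h2pi key
        exact_mod_cast this
      have hzN : z ^ N = 1 := by
        rw [hz, ← Complex.exp_nat_mul,
          show (N:ℂ) * (2*(π:ℂ)*(n:ℂ)/(N:ℂ) * Complex.I) = (n:ℂ) * (2*(π:ℂ)*Complex.I) by
            field_simp]
        exact_mod_cast Complex.exp_int_mul_two_pi_mul_I n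
      have : ∑ j ∈ Finset.Icc 1 N, z ^ j = z * ∑ j ∈ Finset.range N, z ^ j := by
        rw [← Finset.Ico_add_one_right_eq_Icc, Finset.sum_Ico_eq_sum_range,
          show N + 1 - 1 = N from rfl, Finset.mul_sum]
        exact Finset.sum_congr rfl fun j _ => by rw [pow_add, pow_one]
      rw [this, geom_sum_eq hz1, hzN]
      simp only [sub_self, zero_div, mul_zero, if_neg hdvd]
  rw [hsum]
  split
  · ring
  · simp


private lemma sin_mul_cos_pow (x : ℝ) (m : ℕ) :
    Real.sin x * Real.cos x ^ m
      = (∑ k ∈ Finset.range (m+1), (m.choose k : ℂ)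
          * Complex.exp (((2*(k:ℤ) - m + 1 : ℤ) : ℂ) * (x:ℂ) * Complex.I)).im / 2^m := by
  set e : ℂ := Complex.exp ((x:ℂ) * Complex.I) with he_def
  have he : e ≠ 0 := Complex.exp_ne_zero _
  have hcos : (((2*Real.cos x : ℝ)) : ℂ) = e + e⁻¹ := by
    push_cast [Complex.ofReal_cos]
    rw [Complex.cos, show -(x:ℂ) * Complex.I = -((x:ℂ)*Complex.I) by ring, Complex.exp_neg]
    ring
  have key : e * (((2*Real.cos x : ℝ)) : ℂ)^m
      = ∑ k ∈ Finset.range (m+1), (m.choose k : ℂ)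
          * Complex.exp (((2*(k:ℤ) - m + 1 : ℤ) : ℂ) * (x:ℂ) * Complex.I) := by
    rw [hcos, add_pow, Finset.mul_sum]
    refine Finset.sum_congr rfl fun k hk => ?_
    have hk' : k ≤ m := Nat.lt_succ_iff.mp (Finset.mem_range.mp hk)
    have hrhs : Complex.exp (((2*(k:ℤ) - m + 1 : ℤ) : ℂ) * (x:ℂ) * Complex.I)
        = e ^ ((2*(k:ℤ) - m + 1 : ℤ)) := by
      rw [he_def, ← Complex.exp_int_mul, mul_assoc]
    rw [hrhs]
    have hzp : e ^ (1 + (k:ℤ) - ((m - k : ℕ) : ℤ)) = e * e ^ k * (e ^ (m - k))⁻¹ := by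
      rw [zpow_sub₀ he, zpow_add₀ he, zpow_one, zpow_natCast, zpow_natCast, div_eq_mul_inv]
    have hlhs : e * (e ^ k * (e⁻¹) ^ (m - k) * (m.choose k : ℂ))
        = (m.choose k : ℂ) * (e ^ (1 + (k:ℤ) - ((m - k : ℕ) : ℤ))) := by
      rw [inv_pow, hzp]; ring
    rw [hlhs]
    congr 2
    push_cast [Nat.cast_sub hk']
    ring
  have him : (e * (((2*Real.cos x : ℝ)) : ℂ)^m).im = Real.sin x * (2*Real.cos x)^m := by
    rw [← Complex.ofReal_pow]
    simp only [Complex.mul_im, Complex.ofReal_im, Complex.ofReal_re, mul_zero, zero_add,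
      he_def, Complex.exp_ofReal_mul_I_im]
  rw [← key, him, mul_pow]
  have h2 : (0:ℝ) < 2^m := by positivity
  field_simp


private lemma moment (N : ℕ) (hN : 2 ≤ N) (θ : ℝ) (m : ℕ) (hm : m ≤ N - 1) :
    ∑ j ∈ Finset.Icc 1 N, Real.sin (2*π*j/N + θ) * Real.cos (2*π*j/N + θ) ^ m
      = if m = N - 1 then N * Real.sin (N*θ) / 2^(N-1) else 0 := by
  have hN0 : 0 < N := by omega
  have h1 : ∀ j ∈ Finset.Icc 1 N,
      Real.sin (2*π*j/N + θ) * Real.cos (2*π*j/N + θ) ^ m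
        = (∑ k ∈ Finset.range (m+1), (m.choose k : ℂ)
            * Complex.exp (((2*(k:ℤ) - m + 1 : ℤ) : ℂ) * ((2*π*(j:ℝ)/N + θ : ℝ):ℂ)
              * Complex.I)).im / 2^m :=
    fun j _ => sin_mul_cos_pow _ m
  rw [Finset.sum_congr rfl h1, ← Finset.sum_div, ← Complex.im_sum, Finset.sum_comm]
  have h2 : ∀ k ∈ Finset.range (m+1),
      ∑ j ∈ Finset.Icc 1 N, (m.choose k : ℂ)
          * Complex.exp (((2*(k:ℤ) - m + 1 : ℤ) : ℂ) * ((2*π*(j:ℝ)/N + θ : ℝ):ℂ) * Complex.I)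
        = (m.choose k : ℂ) * (if (N:ℤ) ∣ (2*(k:ℤ) - m + 1) then
            (N:ℂ) * Complex.exp (((2*(k:ℤ) - m + 1 : ℤ):ℂ) * (θ:ℂ) * Complex.I) else 0) := by
    intro k _
    rw [← Finset.mul_sum, sum_exp_aux N hN0 θ (2*(k:ℤ) - m + 1)]
  rw [Finset.sum_congr rfl h2, Complex.im_sum]
  have h3 : ∀ k ∈ Finset.range (m+1),
      ((m.choose k : ℂ) * (if (N:ℤ) ∣ (2*(k:ℤ) - m + 1) then
          (N:ℂ) * Complex.exp (((2*(k:ℤ) - m + 1 : ℤ):ℂ) * (θ:ℂ) * Complex.I) else 0)).im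
        = if m = N - 1 ∧ k = m then (N:ℝ) * Real.sin (N*θ) else 0 := by
    intro k hk
    have hk' : k ≤ m := Nat.lt_succ_iff.mp (Finset.mem_range.mp hk)
    set n : ℤ := 2*(k:ℤ) - m + 1 with hn_def
    by_cases hd : (N:ℤ) ∣ n
    · have hbounds : -(N:ℤ) < n ∧ n ≤ N := by
        constructor <;> omega
      have hcase : n = 0 ∨ n = N := by
        obtain ⟨q, hq⟩ := hd
        have hq' : q = 0 ∨ q = 1 := by
          rcases lt_trichotomy q 0 with h | h | h
          · exfalso; nlinarith [hbounds.1, hq]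
          · left; exact h
          · right; nlinarith [hbounds.2, hq]
        rcases hq' with h | h
        · left; rw [hq, h, mul_zero]
        · right; rw [hq, h, mul_one]
      rcases hcase with h0 | hNn
      · have hne : ¬ (m = N - 1 ∧ k = m) := by
          rintro ⟨h1', h2'⟩; omega
        rw [if_pos hd, if_neg hne, h0]
        simp
      · have heq : m = N - 1 ∧ k = m := by omega
        have hch : (m.choose k : ℂ) = 1 := by
          rw [heq.2, Nat.choose_self]; norm_num
        rw [if_pos hd, if_pos heq, hNn, hch, one_mul,
          show (((N:ℕ):ℤ):ℂ) * (θ:ℂ) = (((N:ℝ) * θ : ℝ):ℂ) by push_cast; ring]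
        rw [Complex.mul_im]
        simp only [Complex.natCast_re, Complex.natCast_im, zero_mul, add_zero,
          Complex.exp_ofReal_mul_I_im]
    · have hne : ¬ (m = N - 1 ∧ k = m) := by
        rintro ⟨h1', h2'⟩
        exact hd (by rw [hn_def, h2', h1']; exact ⟨1, by push_cast; omega⟩)
      rw [if_neg hd, if_neg hne]
      simp
  rw [Finset.sum_congr rfl h3]
  by_cases hm' : m = N - 1
  · simp only [hm', true_and]
    rw [Finset.sum_ite_eq' (Finset.range (N-1+1)) (N-1) (fun _ => (N:ℝ) * Real.sin (N*θ))]
    simp [Nat.lt_succ_iff]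
  · simp [hm']


theorem stmt10 (N : ℕ) (hN : 2 ≤ N) (θ : ℝ) (hθ : θ ∈ Set.Ioo 0 (π / N))
    (α : ℝ) (hα : 0 < α) :
    ∃ δ : ℝ, 0 < δ ∧ δ < 1 ∧ ∀ t ∈ Set.Ioc (0:ℝ) δ,
      0 < ∑ j ∈ Finset.Icc 1 N,
        Real.sin (2 * π * j / N + θ) /
          (1 - t * Real.cos (2 * π * j / N + θ)) ^ α := by
  have hN0 : 0 < N := by omega
  have hNR : (0:ℝ) < N := Nat.cast_pos.mpr hN0
  have hsin : 0 < Real.sin (N*θ) := by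
    apply Real.sin_pos_of_pos_of_lt_pi
    · exact mul_pos hNR hθ.1
    · have := hθ.2
      calc (N:ℝ) * θ < N * (π / N) := by exact mul_lt_mul_of_pos_left this hNR
      _ = π := by field_simp
  set a : ℝ := (∏ i ∈ Finset.range (N-1), (α+i)) / (N-1).factorial with ha_def
  set L : ℝ := a * ((N:ℝ) * Real.sin (N*θ) / 2^(N-1)) with hL_def
  set K : ℝ := (∏ i ∈ Finset.range N, (α+i)) * 2 ^ (α + (N:ℝ)) / N.factorial with hK_def
  have ha : 0 < a := by
    apply div_pos (Finset.prod_pos fun i _ => by positivity)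
    exact_mod_cast Nat.factorial_pos _
  have hL : 0 < L := by
    apply mul_pos ha
    apply div_pos (mul_pos hNR hsin)
    positivity
  have hK : 0 < K := by
    apply div_pos
    · exact mul_pos (Finset.prod_pos fun i _ => by positivity) (Real.rpow_pos_of_pos two_pos _)
    · exact_mod_cast Nat.factorial_pos _
  refine ⟨min (1/2) (L / (2*((N:ℝ)*K+1))), lt_min (by norm_num) (by positivity), ?_, ?_⟩
  · calc min (1/2) (L / (2*((N:ℝ)*K+1))) ≤ 1/2 := min_le_left _ _
    _ < 1 := by norm_num
  intro t ht
  have ht0 : 0 < t := ht.1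
  have ht2 : t ≤ 1/2 := le_trans ht.2 (min_le_left _ _)
  have htL : t ≤ L / (2*((N:ℝ)*K+1)) := le_trans ht.2 (min_le_right _ _)
  have htIcc : t ∈ Set.Icc (0:ℝ) (1/2) := ⟨ht0.le, ht2⟩
  have hterm : ∀ j ∈ Finset.Icc 1 N,
      Real.sin (2 * π * j / N + θ) / (1 - t * Real.cos (2 * π * j / N + θ)) ^ α
        = Real.sin (2 * π * j / N + θ)
            * (∑ k ∈ Finset.range N,
                (∏ i ∈ Finset.range k, (α+i)) / k.factorial * (Real.cos (2 * π * j / N + θ))^k * t^k)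
          + Real.sin (2 * π * j / N + θ)
            * ((1 - t * Real.cos (2 * π * j / N + θ)) ^ (-α)
              - ∑ k ∈ Finset.range N,
                (∏ i ∈ Finset.range k, (α+i)) / k.factorial * (Real.cos (2 * π * j / N + θ))^k * t^k) := by
    intro j _
    have hpos : 0 < 1 - t * Real.cos (2 * π * j / N + θ) :=
      lt_of_lt_of_le (by norm_num) (pos_oneSub (abs_cos_le_one _) htIcc le_rfl)
    rw [div_eq_mul_inv, ← Real.rpow_neg hpos.le]
    ring
  rw [Finset.sum_congr rfl hterm, Finset.sum_add_distrib]
  have hmain : ∑ j ∈ Finset.Icc 1 N, Real.sin (2 * π * j / N + θ)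
      * (∑ k ∈ Finset.range N,
          (∏ i ∈ Finset.range k, (α+i)) / k.factorial * (Real.cos (2 * π * j / N + θ))^k * t^k)
      = L * t^(N-1) := by
    have step1 : ∀ j ∈ Finset.Icc 1 N, Real.sin (2 * π * j / N + θ)
        * (∑ k ∈ Finset.range N,
            (∏ i ∈ Finset.range k, (α+i)) / k.factorial * (Real.cos (2 * π * j / N + θ))^k * t^k)
        = ∑ k ∈ Finset.range N, ((∏ i ∈ Finset.range k, (α+i)) / k.factorial * t^k)
            * (Real.sin (2 * π * j / N + θ) * (Real.cos (2 * π * j / N + θ))^k) := by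
      intro j _
      rw [Finset.mul_sum]
      exact Finset.sum_congr rfl fun k _ => by ring
    rw [Finset.sum_congr rfl step1, Finset.sum_comm]
    have step2 : ∀ k ∈ Finset.range N,
        ∑ j ∈ Finset.Icc 1 N, ((∏ i ∈ Finset.range k, (α+i)) / k.factorial * t^k)
            * (Real.sin (2 * π * j / N + θ) * (Real.cos (2 * π * j / N + θ))^k)
        = ((∏ i ∈ Finset.range k, (α+i)) / k.factorial * t^k)
            * (if k = N - 1 then (N:ℝ) * Real.sin (N*θ) / 2^(N-1) else 0) := by
      intro k hk
      rw [← Finset.mul_sum, moment N hN θ k (by have := Finset.mem_range.mp hk; omega)]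
    rw [Finset.sum_congr rfl step2]
    rw [Finset.sum_eq_single_of_mem (N-1) (Finset.mem_range.mpr (by omega))
      (fun k _ hk => by rw [if_neg hk, mul_zero])]
    rw [if_pos rfl, hL_def, ha_def]
    ring
  rw [hmain]
  have herr : |∑ j ∈ Finset.Icc 1 N, Real.sin (2 * π * j / N + θ)
      * ((1 - t * Real.cos (2 * π * j / N + θ)) ^ (-α)
        - ∑ k ∈ Finset.range N,
          (∏ i ∈ Finset.range k, (α+i)) / k.factorial * (Real.cos (2 * π * j / N + θ))^k * t^k)|
      ≤ (N:ℝ) * (K * t^N) := by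
    calc _ ≤ ∑ j ∈ Finset.Icc 1 N, |Real.sin (2 * π * j / N + θ)
        * ((1 - t * Real.cos (2 * π * j / N + θ)) ^ (-α)
          - ∑ k ∈ Finset.range N,
            (∏ i ∈ Finset.range k, (α+i)) / k.factorial * (Real.cos (2 * π * j / N + θ))^k * t^k)| :=
      Finset.abs_sum_le_sum_abs _ _
    _ ≤ ∑ _j ∈ Finset.Icc 1 N, K * t^N := by
      apply Finset.sum_le_sum
      intro j _
      rw [abs_mul]
      have h1 : |Real.sin (2 * π * j / N + θ)| ≤ 1 := abs_sin_le_one _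
      have h2 := taylor_bound α hα N (by omega) (Real.cos (2 * π * j / N + θ))
        (abs_cos_le_one _) t ht0 ht2
      calc |Real.sin (2 * π * j / N + θ)| * _ ≤ 1 * (K * t^N) := by
            apply mul_le_mul h1 _ (abs_nonneg _) zero_le_one
            rw [hK_def]
            exact h2
      _ = K * t^N := one_mul _
    _ = (N:ℝ) * (K * t^N) := by
      rw [Finset.sum_const, Nat.card_Icc]
      simp [nsmul_eq_mul]
  have hE := neg_abs_le (∑ j ∈ Finset.Icc 1 N, Real.sin (2 * π * j / N + θ)
      * ((1 - t * Real.cos (2 * π * j / N + θ)) ^ (-α)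
        - ∑ k ∈ Finset.range N,
          (∏ i ∈ Finset.range k, (α+i)) / k.factorial * (Real.cos (2 * π * j / N + θ))^k * t^k))
  have hkey : (N:ℝ) * (K * t^N) < L * t^(N-1) := by
    have htN : t^N = t^(N-1) * t := by
      conv_lhs => rw [show N = (N-1)+1 by omega]
      rw [pow_succ]
    rw [htN]
    have htpow : 0 < t^(N-1) := pow_pos ht0 _
    have h3 : (N:ℝ) * K * t < L := by
      have h4 : (N:ℝ) * K * t ≤ (N:ℝ) * K * (L / (2*((N:ℝ)*K+1))) := by
        apply mul_le_mul_of_nonneg_left htL (by positivity)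
      have h5 : (N:ℝ) * K * (L / (2*((N:ℝ)*K+1))) < L := by
        rw [mul_div_assoc', div_lt_iff₀ (by positivity)]
        nlinarith [mul_pos hNR hK, hL]
      linarith
    nlinarith [htpow, h3]
  linarith [hE, herr]
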